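/- For λ ≠ 0, the kernel of λI - T̃ equals the set of pairs (g, -λg) with g ∈ ker(((λ + λ⁻¹)/2) I - T); that is, ker(λI - T̃) = (1, -λ) ⊗ ker(((λ+λ⁻¹)/2) I - T). -/

import Mathlib

open ContinuousLinearMap

theorem stmt9 {K₁ : Type*}
    [NormedAddCommGroup K₁] [InnerProductSpace ℂ K₁] [FiniteDimensional ℂ K₁]
    (T : K₁ →L[ℂ] K₁)
    (Ttil : K₁ × K₁ →L[ℂ] K₁ × K₁)
    (hTtil : ∀ f g : K₁, Ttil (f, g) = (-g, f + (2:ℂ) • T g))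
    (lam : ℂ) (hlam : lam ≠ 0) :
    {ψ : K₁ × K₁ | lam • ψ - Ttil ψ = 0}
      = {ψ : K₁ × K₁ | ∃ g : K₁, T g = ((lam + lam⁻¹) / 2) • g ∧ ψ = (g, -(lam • g))} := by
  have h2l : (2 * lam : ℂ) ≠ 0 := by simp [hlam]
  ext ⟨f, g⟩
  simp only [Set.mem_setOf_eq, hTtil, Prod.smul_mk, Prod.mk_sub_mk, Prod.mk_eq_zero,
    Prod.ext_iff, sub_neg_eq_add, Prod.fst_zero, Prod.snd_zero]
  constructor
  · rintro ⟨h1, h2⟩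
    have hg : g = -(lam • f) := by linear_combination (norm := module) h1
    subst hg
    rw [map_neg, map_smul] at h2
    refine ⟨f, ?_, rfl, rfl⟩
    have key : (2 * lam) • T f = (lam ^ 2 + 1) • f := by
      linear_combination (norm := module) h2
    have hf : T f = ((2 * lam)⁻¹ * (lam ^ 2 + 1)) • f := by
      rw [← inv_smul_smul₀ h2l (T f), key, smul_smul]
    rw [hf]
    congr 1
    field_simp
  · rintro ⟨g', hT, rfl, rfl⟩
    rw [map_neg, map_smul, hT]
    constructor
    · simp
    · match_scalars <;> field_simp <;> ring
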